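/- A 2-site (K,J) admits a bicategory of fractions for the class W_J of weak equivalences; that is, W_J satisfies Pronk's conditions BF1–BF4. -/

import Mathlib

open CategoryTheory Bicategory

universe w v u

variable {B : Type u} [Bicategory.{w, v} B]

/-- Postcomposition with a 1-morphism, as a functor between hom-categories. -/
@[simps] def Postcomp {a b : B} (q : a ⟶ b) (z : B) : (z ⟶ a) ⥤ (z ⟶ b) where
  obj h := h ≫ q
  map α := α ▷ q

/-- A 1-morphism is ff if all postcomposition functors are fully faithful. -/
def IsFF {a b : B} (q : a ⟶ b) : Prop :=
  ∀ z : B, (Postcomp q z).Full ∧ (Postcomp q z).Faithful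

/-- Internal equivalence in a bicategory. -/
def IsIntEquiv {a b : B} (f : a ⟶ b) : Prop :=
  ∃ g : b ⟶ a, Nonempty (f ≫ g ≅ 𝟙 a) ∧ Nonempty (g ≫ f ≅ 𝟙 b)

/-- A fully faithful singleton coverage on a 2-category; a 2-site. -/
structure TwoSite (B : Type u) [Bicategory.{w, v} B] where
  J : ∀ ⦃a b : B⦄, (a ⟶ b) → Prop
  id_mem : ∀ a : B, J (𝟙 a)
  comp_mem : ∀ ⦃a b c : B⦄ {f : a ⟶ b} {g : b ⟶ c}, J f → J g → J (f ≫ g)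
  square : ∀ ⦃u x y : B⦄ (q : u ⟶ x), J q → ∀ f : y ⟶ x,
    ∃ (v : B) (k : v ⟶ y) (h : v ⟶ u), J k ∧ Nonempty (h ≫ q ≅ k ≫ f)
  ff : ∀ ⦃a b : B⦄ {q : a ⟶ b}, J q → IsFF q

/-- A 1-arrow is J-locally split. -/
def LocallySplit (S : TwoSite B) {x y : B} (f : x ⟶ y) : Prop :=
  ∃ (u : B) (j : u ⟶ y), S.J j ∧ ∃ s : u ⟶ x, Nonempty (s ≫ f ≅ j)

/-- A weak equivalence: ff and J-locally split. -/
def WeakEquiv (S : TwoSite B) {x y : B} (f : x ⟶ y) : Prop :=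
  IsFF f ∧ LocallySplit S f

/-- Pronk's BF1: W contains all equivalences. -/
def BF1 (W : ∀ ⦃a b : B⦄, (a ⟶ b) → Prop) : Prop :=
  ∀ ⦃a b : B⦄ (f : a ⟶ b), IsIntEquiv f → W f

/-- Pronk's BF2: W is closed under composition and isomorphism. -/
def BF2 (W : ∀ ⦃a b : B⦄, (a ⟶ b) → Prop) : Prop :=
  (∀ ⦃a b c : B⦄ {f : a ⟶ b} {g : b ⟶ c}, W f → W g → W (f ≫ g)) ∧
  (∀ ⦃a b : B⦄ {f g : a ⟶ b}, W f → Nonempty (f ≅ g) → W g)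

/-- Pronk's BF3: cospans with one leg in W complete to 2-commuting squares. -/
def BF3 (W : ∀ ⦃a b : B⦄, (a ⟶ b) → Prop) : Prop :=
  ∀ ⦃a a' c : B⦄ (w : a' ⟶ a) (f : c ⟶ a), W w →
    ∃ (p : B) (v : p ⟶ c) (g : p ⟶ a'), W v ∧ Nonempty (g ≫ w ≅ v ≫ f)

/-- Pronk's BF4: 2-cells into arrows of W factor, essentially uniquely. -/
def BF4 (W : ∀ ⦃a b : B⦄, (a ⟶ b) → Prop) : Prop :=
  ∀ ⦃x y z : B⦄ (f g : x ⟶ y) (w : y ⟶ z), W w → ∀ α : f ≫ w ⟶ g ≫ w,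
    (∃ (x' : B) (v : x' ⟶ x) (β : v ≫ f ⟶ v ≫ g), W v ∧
       β ▷ w = (α_ v f w).hom ≫ v ◁ α ≫ (α_ v g w).inv ∧
       (IsIso α → IsIso β)) ∧
    (∀ (x' x'' : B) (v : x' ⟶ x) (v' : x'' ⟶ x)
       (β : v ≫ f ⟶ v ≫ g) (β' : v' ≫ f ⟶ v' ≫ g), W v → W v' →
       β ▷ w = (α_ v f w).hom ≫ v ◁ α ≫ (α_ v g w).inv →
       β' ▷ w = (α_ v' f w).hom ≫ v' ◁ α ≫ (α_ v' g w).inv →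
       ∃ (t : B) (u : t ⟶ x') (u' : t ⟶ x''),
         W (u ≫ v) ∧ W (u' ≫ v') ∧
         ∃ e : u ≫ v ≅ u' ≫ v',
           e.hom ▷ f ≫ (α_ u' v' f).hom ≫ u' ◁ β' =
             (α_ u v f).hom ≫ u ◁ β ≫ (α_ u v g).inv ≫
               e.hom ▷ g ≫ (α_ u' v' g).hom)


section Helpers

variable (S : TwoSite B)

@[simps!] def postcompCompIso {a b c : B} (f : a ⟶ b) (g : b ⟶ c) (z : B) :
    Postcomp (f ≫ g) z ≅ Postcomp f z ⋙ Postcomp g z :=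
  NatIso.ofComponents (fun h => (α_ h f g).symm) (by intros; simp [Postcomp])

@[simps!] def postcompIdIso (a z : B) : Postcomp (𝟙 a) z ≅ 𝟭 (z ⟶ a) :=
  NatIso.ofComponents (fun h => ρ_ h) (by intros; simp [Postcomp])

@[simps!] def postcompIso {a b : B} {f g : a ⟶ b} (e : f ≅ g) (z : B) :
    Postcomp f z ≅ Postcomp g z :=
  NatIso.ofComponents (fun h => whiskerLeftIso h e) (by intros; simp [Postcomp, whisker_exchange])

theorem isFF_comp {a b c : B} {f : a ⟶ b} {g : b ⟶ c} (hf : IsFF f) (hg : IsFF g) :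
    IsFF (f ≫ g) := by
  intro z
  haveI := (hf z).1; haveI := (hf z).2; haveI := (hg z).1; haveI := (hg z).2
  exact ⟨Functor.Full.of_iso (postcompCompIso f g z).symm,
    Functor.Faithful.of_iso (postcompCompIso f g z).symm⟩

theorem isFF_of_iso {a b : B} {f g : a ⟶ b} (e : f ≅ g) (hf : IsFF f) : IsFF g := by
  intro z
  haveI := (hf z).1; haveI := (hf z).2
  exact ⟨Functor.Full.of_iso (postcompIso e z), Functor.Faithful.of_iso (postcompIso e z)⟩

theorem isFF_of_equiv {a b : B} {f : a ⟶ b} (hf : IsIntEquiv f) : IsFF f := by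
  obtain ⟨g, ⟨η⟩, ⟨ε'⟩⟩ := hf
  intro z
  have i1 : Postcomp f z ⋙ Postcomp g z ≅ 𝟭 (z ⟶ a) :=
    (postcompCompIso f g z).symm ≪≫ postcompIso η z ≪≫ postcompIdIso a z
  have i2 : Postcomp g z ⋙ Postcomp f z ≅ 𝟭 (z ⟶ b) :=
    (postcompCompIso g f z).symm ≪≫ postcompIso ε' z ≪≫ postcompIdIso b z
  haveI : (Postcomp f z ⋙ Postcomp g z).Faithful := Functor.Faithful.of_iso i1.symm
  haveI : (Postcomp g z ⋙ Postcomp f z).Faithful := Functor.Faithful.of_iso i2.symm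
  haveI : (Postcomp f z ⋙ Postcomp g z).Full := Functor.Full.of_iso i1.symm
  haveI : (Postcomp f z).Faithful := Functor.Faithful.of_comp (Postcomp f z) (Postcomp g z)
  haveI : (Postcomp g z).Faithful := Functor.Faithful.of_comp (Postcomp g z) (Postcomp f z)
  haveI : (Postcomp f z).Full := Functor.Full.of_comp_faithful (Postcomp f z) (Postcomp g z)
  exact ⟨inferInstance, inferInstance⟩

theorem weakEquiv_of_J {a b : B} {j : a ⟶ b} (hj : S.J j) : WeakEquiv S j :=
  ⟨S.ff hj, a, j, hj, 𝟙 a, ⟨λ_ j⟩⟩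

theorem weakEquiv_of_equiv {a b : B} {f : a ⟶ b} (hf : IsIntEquiv f) : WeakEquiv S f := by
  obtain ⟨g, ⟨η⟩, ⟨ε'⟩⟩ := hf
  exact ⟨isFF_of_equiv ⟨g, ⟨η⟩, ⟨ε'⟩⟩, b, 𝟙 b, S.id_mem b, g, ⟨ε'⟩⟩

theorem weakEquiv_comp {x y z : B} {f : x ⟶ y} {g : y ⟶ z}
    (hf : WeakEquiv S f) (hg : WeakEquiv S g) : WeakEquiv S (f ≫ g) := by
  refine ⟨isFF_comp hf.1 hg.1, ?_⟩
  obtain ⟨u, j, hj, s, ⟨e⟩⟩ := hg.2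
  obtain ⟨u', j', hj', s', ⟨e'⟩⟩ := hf.2
  obtain ⟨p, k, h, hk, ⟨e''⟩⟩ := S.square j' hj' s
  refine ⟨p, k ≫ j, S.comp_mem hk hj, h ≫ s', ⟨?_⟩⟩
  calc (h ≫ s') ≫ f ≫ g ≅ h ≫ (s' ≫ f) ≫ g :=
        α_ h s' (f ≫ g) ≪≫ whiskerLeftIso h (α_ s' f g).symm
    _ ≅ h ≫ j' ≫ g := whiskerLeftIso h (whiskerRightIso e' g)
    _ ≅ (h ≫ j') ≫ g := (α_ h j' g).symm
    _ ≅ (k ≫ s) ≫ g := whiskerRightIso e'' g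
    _ ≅ k ≫ s ≫ g := α_ k s g
    _ ≅ k ≫ j := whiskerLeftIso k e

theorem weakEquiv_of_iso {a b : B} {f g : a ⟶ b} (hf : WeakEquiv S f)
    (e : f ≅ g) : WeakEquiv S g := by
  refine ⟨isFF_of_iso e hf.1, ?_⟩
  obtain ⟨u, j, hj, s, ⟨e'⟩⟩ := hf.2
  exact ⟨u, j, hj, s, ⟨whiskerLeftIso s e.symm ≪≫ e'⟩⟩

theorem weakEquiv_BF3 {a a' c : B} (w : a' ⟶ a) (f : c ⟶ a) (hw : WeakEquiv S w) :
    ∃ (p : B) (v : p ⟶ c) (g : p ⟶ a'), WeakEquiv S v ∧ Nonempty (g ≫ w ≅ v ≫ f) := by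
  obtain ⟨u, j, hj, s, ⟨e⟩⟩ := hw.2
  obtain ⟨p, k, h, hk, ⟨e'⟩⟩ := S.square j hj f
  exact ⟨p, k, h ≫ s, weakEquiv_of_J S hk,
    ⟨α_ h s w ≪≫ whiskerLeftIso h e ≪≫ e'⟩⟩

end Helpers

/-- a 2-site admits a bicategory of fractions for its weak
equivalences, i.e. W_J satisfies Pronk's conditions BF1–BF4. -/
theorem twoSite_admits_fractions (S : TwoSite B) :
    BF1 (fun _ _ f => WeakEquiv S f) ∧ BF2 (fun _ _ f => WeakEquiv S f) ∧
    BF3 (fun _ _ f => WeakEquiv S f) ∧ BF4 (fun _ _ f => WeakEquiv S f) := by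
  refine ⟨?_, ⟨?_, ?_⟩, ?_, ?_⟩
  · -- BF1
    intro a b f hf
    exact weakEquiv_of_equiv S hf
  · -- BF2 composition
    intro a b c f g hf hg
    exact weakEquiv_comp S hf hg
  · -- BF2 isomorphism
    intro a b f g hf ⟨e⟩
    exact weakEquiv_of_iso S hf e
  · -- BF3
    intro a a' c w f hw
    exact weakEquiv_BF3 S w f hw
  · -- BF4
    intro x y z f g w hw α
    haveI := (hw.1 x).1
    haveI := (hw.1 x).2
    obtain ⟨γ, hγ⟩ := (Postcomp w x).map_surjective α
    simp only [Postcomp_map] at hγ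
    constructor
    · refine ⟨x, 𝟙 x, 𝟙 x ◁ γ, weakEquiv_of_equiv S ⟨𝟙 x, ⟨λ_ (𝟙 x)⟩, ⟨λ_ (𝟙 x)⟩⟩, ?_, ?_⟩
      · rw [whisker_assoc, hγ]
      · intro hα
        haveI : IsIso ((Postcomp w x).map γ) := by simpa [Postcomp, hγ] using hα
        haveI : IsIso γ := isIso_of_fully_faithful (Postcomp w x) γ
        infer_instance
    · intro x' x'' v v' β β' hv hv' hβ hβ'
      -- β and β' are both whiskerings of γ
      haveI := (hw.1 x').2
      haveI := (hw.1 x'').2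
      have hβγ : β = v ◁ γ := by
        apply (Postcomp w x').map_injective
        simp only [Postcomp_map]
        rw [hβ, whisker_assoc, hγ]
      have hβ'γ : β' = v' ◁ γ := by
        apply (Postcomp w x'').map_injective
        simp only [Postcomp_map]
        rw [hβ', whisker_assoc, hγ]
      obtain ⟨t, uW, u, huW, ⟨e⟩⟩ := weakEquiv_BF3 S v v' hv
      refine ⟨t, u, uW, ?_, ?_, e, ?_⟩
      · exact weakEquiv_of_iso S (weakEquiv_comp S huW hv') e.symm
      · exact weakEquiv_comp S huW hv'
      · subst hβγ hβ'γ
        calc e.hom ▷ f ≫ (α_ uW v' f).hom ≫ uW ◁ v' ◁ γ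
            = e.hom ▷ f ≫ (uW ≫ v') ◁ γ ≫ (α_ uW v' g).hom := by
              rw [← associator_naturality_right]
          _ = (u ≫ v) ◁ γ ≫ e.hom ▷ g ≫ (α_ uW v' g).hom := by
              rw [← whisker_exchange_assoc]
          _ = (α_ u v f).hom ≫ u ◁ v ◁ γ ≫ (α_ u v g).inv ≫ e.hom ▷ g ≫ (α_ uW v' g).hom := by
              rw [← associator_naturality_right_assoc]
              simp
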